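/- Let Δ(t) = (t − 1)² · (1 − 6t + 19t² − 29t³ + 19t⁴ − 6t⁵ + t⁶) ∈ ℤ[t, t⁻¹]. Then there is no Laurent polynomial f ∈ ℤ[t, t⁻¹] and no unit u = ±tᵏ of ℤ[t, t⁻¹] such that Δ(t) = u · f(t) · f(t⁻¹). -/

import Mathlib

open Polynomial LaurentPolynomial

/-- Eisenstein integers mod 16: pairs `a + b ω` with `ω² = -1 - ω`. -/
structure Eis where
  a : ZMod 16
  b : ZMod 16
deriving DecidableEq

namespace Eis

@[ext] lemma ext' {x y : Eis} (h1 : x.a = y.a) (h2 : x.b = y.b) : x = y := by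
  cases x; cases y; cases h1; cases h2; rfl

instance : Zero Eis := ⟨⟨0, 0⟩⟩
instance : One Eis := ⟨⟨1, 0⟩⟩
instance : Add Eis := ⟨fun x y => ⟨x.a + y.a, x.b + y.b⟩⟩
instance : Neg Eis := ⟨fun x => ⟨-x.a, -x.b⟩⟩
instance : Mul Eis := ⟨fun x y => ⟨x.a * y.a - x.b * y.b, x.a * y.b + x.b * y.a - x.b * y.b⟩⟩

@[simp] lemma add_a (x y : Eis) : (x + y).a = x.a + y.a := rfl
@[simp] lemma add_b (x y : Eis) : (x + y).b = x.b + y.b := rfl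
@[simp] lemma neg_a (x : Eis) : (-x).a = -x.a := rfl
@[simp] lemma neg_b (x : Eis) : (-x).b = -x.b := rfl
@[simp] lemma mul_a (x y : Eis) : (x * y).a = x.a * y.a - x.b * y.b := rfl
@[simp] lemma mul_b (x y : Eis) : (x * y).b = x.a * y.b + x.b * y.a - x.b * y.b := rfl
@[simp] lemma one_a : (1 : Eis).a = 1 := rfl
@[simp] lemma one_b : (1 : Eis).b = 0 := rfl
@[simp] lemma zero_a : (0 : Eis).a = 0 := rfl
@[simp] lemma zero_b : (0 : Eis).b = 0 := rfl

instance : CommRing Eis where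
  add := (· + ·)
  add_assoc x y z := by ext <;> simp <;> ring
  zero := 0
  zero_add x := by ext <;> simp
  add_zero x := by ext <;> simp
  add_comm x y := by ext <;> simp <;> ring
  mul := (· * ·)
  left_distrib x y z := by ext <;> simp <;> ring
  right_distrib x y z := by ext <;> simp <;> ring
  zero_mul x := by ext <;> simp
  mul_zero x := by ext <;> simp
  mul_assoc x y z := by ext <;> simp <;> ring
  one := 1
  one_mul x := by ext <;> simp
  mul_one x := by ext <;> simp
  neg := Neg.neg
  neg_add_cancel x := by ext <;> simp
  mul_comm x y := by ext <;> simp <;> ring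
  nsmul := nsmulRec
  zsmul := zsmulRec

/-- ω -/
def om : Eis := ⟨0, 1⟩

/-- ω as a unit (inverse ω² = -1 - ω). -/
def omu : Eisˣ :=
  ⟨om, ⟨-1, -1⟩, by decide, by decide⟩

@[simp] lemma omu_val : (omu : Eis) = om := rfl

/-- conjugation: a + bω ↦ a + bω² = (a-b) - bω. -/
def conjFun : Eis → Eis := fun x => ⟨x.a - x.b, -x.b⟩

def conj : Eis →+* Eis where
  toFun := conjFun
  map_one' := by decide
  map_mul' x y := by ext <;> simp [conjFun] <;> ring
  map_zero' := by decide
  map_add' x y := by ext <;> simp [conjFun] <;> ring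

@[simp] lemma conj_a (x : Eis) : (conj x).a = x.a - x.b := rfl
@[simp] lemma conj_b (x : Eis) : (conj x).b = -x.b := rfl

lemma conj_omu_zpow (n : ℤ) : conj ((omu ^ n : Eisˣ) : Eis) = ((omu ^ (-n) : Eisˣ) : Eis) := by
  have h1 : (Units.map (conj : Eis →+* Eis).toMonoidHom) omu = omu⁻¹ := by
    apply Units.ext
    decide
  have : (Units.map (conj : Eis →+* Eis).toMonoidHom) (omu ^ n) = omu ^ (-n) := by
    rw [map_zpow, h1, inv_zpow, zpow_neg]
  calc conj ((omu ^ n : Eisˣ) : Eis)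
      = ((Units.map (conj : Eis →+* Eis).toMonoidHom) (omu ^ n) : Eis) := rfl
    _ = ((omu ^ (-n) : Eisˣ) : Eis) := by rw [this]

/-- the evaluation map `T ↦ ω` from Laurent polynomials. -/
noncomputable def phi : LaurentPolynomial ℤ →+* Eis :=
  AddMonoidAlgebra.liftNCRingHom (Int.castRingHom Eis)
    ((Units.coeHom Eis).comp (zpowersHom Eisˣ omu)) (fun _ _ => Commute.all _ _)

lemma phi_T (n : ℤ) : phi (T n) = ((omu ^ n : Eisˣ) : Eis) := by
  rw [phi, T, AddMonoidAlgebra.liftNCRingHom_single]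
  simp

lemma phi_C (z : ℤ) : phi (LaurentPolynomial.C z) = (z : Eis) := by
  have : LaurentPolynomial.C z = ((z : ℤ) : LaurentPolynomial ℤ) := by
    rw [← map_intCast (LaurentPolynomial.C (R := ℤ)) z]
    norm_num
  rw [this, map_intCast]

lemma phi_invert (f : LaurentPolynomial ℤ) : phi (invert f) = conj (phi f) := by
  induction f using LaurentPolynomial.induction_on' with
  | add p q hp hq => simp [map_add, hp, hq]
  | C_mul_T n z =>
      rw [map_mul, invert_C, invert_T, map_mul, map_mul, phi_C, phi_T, phi_T]
      rw [map_mul, map_intCast, conj_omu_zpow]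

lemma norm_mul (x y : Eis) :
    ((x * y).a ^ 2 - (x * y).a * (x * y).b + (x * y).b ^ 2)
      = (x.a ^ 2 - x.a * x.b + x.b ^ 2) * (y.a ^ 2 - y.a * y.b + y.b ^ 2) := by
  simp; ring

lemma unit_norm {v : Eis} (hv : IsUnit v) : (v.a ^ 2 - v.a * v.b + v.b ^ 2) * 8 = 8 := by
  obtain ⟨w, hw⟩ := hv.exists_right_inv
  have h := norm_mul v w
  rw [hw] at h
  simp at h
  have key : ∀ n m : ZMod 16, n * m = 1 → n * 8 = 8 := by decide
  exact key _ _ h.symm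

lemma norm_vals : ∀ a b : ZMod 16,
    (a ^ 2 - a * b + b ^ 2) * 8 = 8 ∨ a ^ 2 - a * b + b ^ 2 = 0 ∨
      a ^ 2 - a * b + b ^ 2 = 4 ∨ a ^ 2 - a * b + b ^ 2 = 12 := by decide

lemma final : ∀ p q n : ZMod 16,
    (n * 8 = 8 ∨ n = 0 ∨ n = 4 ∨ n = 12) → (p ^ 2 - p * q + q ^ 2) * 8 = 8 →
      p * n = 0 → q * n = 8 → False := by decide

lemma main (v z : Eis) (hv : IsUnit v) : (⟨0, 8⟩ : Eis) ≠ v * z * conj z := by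
  intro h
  have hz : z * conj z = ⟨z.a ^ 2 - z.a * z.b + z.b ^ 2, 0⟩ := by ext <;> simp <;> ring
  rw [mul_assoc, hz] at h
  have h1 : v.a * (z.a ^ 2 - z.a * z.b + z.b ^ 2) = 0 := by
    have := congrArg Eis.a h; simp at this; linear_combination -this
  have h2 : v.b * (z.a ^ 2 - z.a * z.b + z.b ^ 2) = 8 := by
    have := congrArg Eis.b h; simp at this; linear_combination -this
  exact final v.a v.b _ (norm_vals z.a z.b) (unit_norm hv) h1 h2

end Eis

/-- Δ(t) = (t−1)²·(1 − 6t + 19t² − 29t³ + 19t⁴ − 6t⁵ + t⁶) ∈ ℤ[t,t⁻¹]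
cannot be written as u·f(t)·f(t⁻¹) for a Laurent polynomial f and a unit u of ℤ[t,t⁻¹]
(the units of ℤ[t,t⁻¹] being exactly the ±tᵏ). -/
theorem stmt_17 :
    ¬ ∃ (f : LaurentPolynomial ℤ) (u : (LaurentPolynomial ℤ)ˣ),
      Polynomial.toLaurent
          ((X - 1) ^ 2 * (1 - 6 * X + 19 * X ^ 2 - 29 * X ^ 3 + 19 * X ^ 4 - 6 * X ^ 5 + X ^ 6) :
            Polynomial ℤ) =
        (u : LaurentPolynomial ℤ) * f * LaurentPolynomial.invert f := by
  rintro ⟨f, u, h⟩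
  apply_fun Eis.phi at h
  have hL : Eis.phi (Polynomial.toLaurent
      ((X - 1) ^ 2 * (1 - 6 * X + 19 * X ^ 2 - 29 * X ^ 3 + 19 * X ^ 4 - 6 * X ^ 5 + X ^ 6) :
        Polynomial ℤ)) = (⟨0, 8⟩ : Eis) := by
    simp only [map_mul, map_pow, map_sub, map_add, map_one, map_ofNat,
      Polynomial.toLaurent_X, Eis.phi_T]
    decide
  rw [hL, map_mul, map_mul, Eis.phi_invert] at h
  exact Eis.main _ _ (u.isUnit.map Eis.phi) h
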